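/- Assume η_n → 0 and set a_n = min{√n, η_n^{-1}}. Then for every ε > 0 there exists M ≥ 0 such that sup_{n∈ℕ} sup_{θ∈ℝ} P_{n,θ}(a_n|θ̂_H − θ| > M) < ε, i.e., the hard-thresholding estimator is uniformly a_n-consistent. -/

import Mathlib

open MeasureTheory ProbabilityTheory Real Filter Topology Set

noncomputable def stdGauss : Measure ℝ := gaussianReal 0 1

/-- Standard normal cdf. -/
noncomputable def Phi (x : ℝ) : ℝ := (stdGauss (Set.Iic x)).toReal

/-- Standard normal density. -/
noncomputable def phi (x : ℝ) : ℝ := gaussianPDFReal 0 1 x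

/-- Hard-thresholding estimator. -/
noncomputable def hardThresh (η y : ℝ) : ℝ := if η < |y| then y else 0

/-- Soft-thresholding (LASSO) estimator. -/
noncomputable def softThresh (η y : ℝ) : ℝ := Real.sign y * max (|y| - η) 0

/-- SCAD estimator. -/
noncomputable def scadThresh (a η y : ℝ) : ℝ :=
  if |y| ≤ 2 * η then Real.sign y * max (|y| - η) 0
  else if |y| ≤ a * η then ((a - 1) * y - Real.sign y * a * η) / (a - 2)
  else y

lemma aux_div_bound (s b z : ℝ) (hs : 0 ≤ s) (hb0 : 0 ≤ b) (hbs : b ≤ s) :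
    b * |z / s| ≤ |z| := by
  rcases eq_or_lt_of_le hs with h | h
  · simp [← h]
  · rw [abs_div, abs_of_pos h, div_eq_mul_inv, ← mul_assoc]
    calc b * |z| * s⁻¹ ≤ s * |z| * s⁻¹ := by
          have := mul_le_mul_of_nonneg_right (mul_le_mul_of_nonneg_right hbs (abs_nonneg z))
            (inv_nonneg.mpr h.le)
          exact this
      _ = |z| := by field_simp
      _ ≤ |z| := le_rfl

lemma key_bound (η : ℕ → ℝ) (hηpos : ∀ n, 0 < η n) (n : ℕ) (θ z : ℝ) :
    min (Real.sqrt n) (η n)⁻¹ * |hardThresh (η n) (θ + z / Real.sqrt n) - θ| ≤ 1 + |z| := by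
  set s := Real.sqrt n with hsdef
  have hs : 0 ≤ s := Real.sqrt_nonneg _
  have hη := hηpos n
  set a := min s (η n)⁻¹ with hadef
  have ha0 : 0 ≤ a := le_min hs (inv_nonneg.mpr hη.le)
  have has : a ≤ s := min_le_left _ _
  have haη : a ≤ (η n)⁻¹ := min_le_right _ _
  have hzbd : a * |z / s| ≤ |z| := aux_div_bound s a z hs ha0 has
  unfold hardThresh
  split_ifs with h
  · have : θ + z / s - θ = z / s := by ring
    rw [this]
    nlinarith [abs_nonneg z]
  · push_neg at h
    have hθ : |θ| ≤ η n + |z / s| := by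
      have : θ = (θ + z / s) - z / s := by ring
      rw [this]
      calc |(θ + z / s) - z / s| ≤ |θ + z / s| + |z / s| := abs_sub _ _
        _ ≤ η n + |z / s| := by linarith
    have h1 : a * |0 - θ| = a * |θ| := by rw [zero_sub, abs_neg]
    rw [h1]
    have h2 : a * |θ| ≤ a * (η n + |z / s|) := mul_le_mul_of_nonneg_left hθ ha0
    have h3 : a * η n ≤ 1 := by
      calc a * η n ≤ (η n)⁻¹ * η n := mul_le_mul_of_nonneg_right haη hη.le
        _ = 1 := inv_mul_cancel₀ hη.ne'
    nlinarith

theorem stmt_6 (η : ℕ → ℝ) (hηpos : ∀ n, 0 < η n) (hη0 : Tendsto η atTop (𝓝 0)) :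
    ∀ ε > (0 : ℝ), ∃ M : ℝ, 0 ≤ M ∧
      (⨆ n : ℕ, ⨆ θ : ℝ,
          stdGauss {z : ℝ |
            M < min (Real.sqrt n) (η n)⁻¹ * |hardThresh (η n) (θ + z / Real.sqrt n) - θ|})
        < ENNReal.ofReal ε := by
  intro ε hε
  -- tail sets
  set S : ℕ → Set ℝ := fun k => {z : ℝ | (k : ℝ) < |z|} with hS
  have hSmeas : ∀ k, MeasurableSet (S k) := fun k =>
    measurableSet_lt measurable_const (measurable_id.abs)
  have hmono : Antitone S := by
    intro i j hij z hz
    simp only [hS, Set.mem_setOf_eq] at *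
    exact lt_of_le_of_lt (by exact_mod_cast hij) hz
  have hempty : ⋂ k, S k = ∅ := by
    ext z
    simp only [Set.mem_iInter, Set.mem_empty_iff_false, iff_false, not_forall, hS,
      Set.mem_setOf_eq, not_lt]
    obtain ⟨k, hk⟩ := exists_nat_ge |z|
    exact ⟨k, hk⟩
  haveI : IsFiniteMeasure stdGauss := by unfold stdGauss; infer_instance
  have htend : Tendsto (fun k => stdGauss (S k)) atTop (𝓝 0) := by
    have := MeasureTheory.tendsto_measure_iInter_atTop (μ := stdGauss) (s := S)
      (fun k => (hSmeas k).nullMeasurableSet) hmono ⟨0, measure_ne_top _ _⟩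
    rwa [hempty, measure_empty] at this
  have hev : ∀ᶠ k in atTop, stdGauss (S k) < ENNReal.ofReal ε :=
    htend.eventually_lt_const (by simpa using hε)
  obtain ⟨N, hN⟩ := hev.exists
  refine ⟨(N : ℝ) + 1, by positivity, ?_⟩
  have hsub : ∀ n : ℕ, ∀ θ : ℝ,
      {z : ℝ | (N : ℝ) + 1 <
        min (Real.sqrt n) (η n)⁻¹ * |hardThresh (η n) (θ + z / Real.sqrt n) - θ|} ⊆ S N := by
    intro n θ z hz
    simp only [hS, Set.mem_setOf_eq] at hz ⊢
    have := key_bound η hηpos n θ z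
    linarith
  calc (⨆ n : ℕ, ⨆ θ : ℝ,
          stdGauss {z : ℝ |
            (N : ℝ) + 1 < min (Real.sqrt n) (η n)⁻¹ *
              |hardThresh (η n) (θ + z / Real.sqrt n) - θ|})
      ≤ stdGauss (S N) := by
        refine iSup_le fun n => iSup_le fun θ => measure_mono (hsub n θ)
    _ < ENNReal.ofReal ε := hN
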